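/- Let p, q, r be pairwise coprime integers greater than 1 with inverses as above. Then (q⁻¹(p) + r⁻¹(p))/p + (r⁻¹(q) + p⁻¹(q))/q + (p⁻¹(r) + q⁻¹(r))/r = 3 + 1/(qr) + 1/(rp) + 1/(pq). -/

import Mathlib

lemma key_inv (a b x y : ℕ) (ha : 1 < a) (hb : 1 < b) (hab : Nat.Coprime a b)
    (hx1 : 1 ≤ x) (hx2 : x ≤ b - 1) (hx : a * x ≡ 1 [MOD b])
    (hy1 : 1 ≤ y) (hy2 : y ≤ a - 1) (hy : b * y ≡ 1 [MOD a]) :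
    a * x + b * y = a * b + 1 := by
  have hN1 : 1 ≤ a * x + b * y :=
    le_trans (Nat.one_le_iff_ne_zero.mpr (by positivity)) (Nat.le_add_right _ _)
  have hma : a * x + b * y ≡ 1 [MOD a] := by
    calc a * x + b * y ≡ 0 + b * y [MOD a] :=
          Nat.ModEq.add_right _ (Nat.modEq_zero_iff_dvd.mpr ⟨x, rfl⟩)
    _ = b * y := by ring
    _ ≡ 1 [MOD a] := hy
  have hmb : a * x + b * y ≡ 1 [MOD b] := by
    calc a * x + b * y ≡ a * x + 0 [MOD b] :=
          Nat.ModEq.add_left _ (Nat.modEq_zero_iff_dvd.mpr ⟨y, rfl⟩)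
    _ = a * x := by ring
    _ ≡ 1 [MOD b] := hx
  have hda : a ∣ a * x + b * y - 1 := (Nat.modEq_iff_dvd' hN1).mp hma.symm
  have hdb : b ∣ a * x + b * y - 1 := (Nat.modEq_iff_dvd' hN1).mp hmb.symm
  have hdab : a * b ∣ a * x + b * y - 1 := Nat.Coprime.mul_dvd_of_dvd_of_dvd hab hda hdb
  have hdZ : (a : ℤ) * b ∣ (a : ℤ) * x + b * y - 1 := by
    have := Int.natCast_dvd_natCast.mpr hdab
    push_cast [Nat.cast_sub hN1] at this
    convert this using 1
  obtain ⟨k, hk⟩ := hdZ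
  have hx2' : (x : ℤ) + 1 ≤ b := by exact_mod_cast Nat.add_le_of_le_sub (le_of_lt hb) hx2
  have hy2' : (y : ℤ) + 1 ≤ a := by exact_mod_cast Nat.add_le_of_le_sub (le_of_lt ha) hy2
  have hx1' : (1 : ℤ) ≤ x := by exact_mod_cast hx1
  have hy1' : (1 : ℤ) ≤ y := by exact_mod_cast hy1
  have ha' : (1 : ℤ) < a := by exact_mod_cast ha
  have hb' : (1 : ℤ) < b := by exact_mod_cast hb
  have hab0 : (0 : ℤ) < a * b := by positivity
  have hub : (a : ℤ) * x + (b : ℤ) * y - 1 < 2 * (a * b) := by nlinarith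
  have hlb : (0 : ℤ) < (a : ℤ) * x + (b : ℤ) * y - 1 := by nlinarith
  have hk1 : k = 1 := by
    have h1 : 1 ≤ k := by nlinarith
    have h2 : k ≤ 1 := by nlinarith
    omega
  have : (a : ℤ) * x + b * y = a * b + 1 := by rw [hk1, mul_one] at hk; linarith
  exact_mod_cast this

/-- For pairwise coprime `p, q, r > 1`, with inverses in `{1,...,modulus-1}`,
`(q⁻¹(p)+r⁻¹(p))/p + (r⁻¹(q)+p⁻¹(q))/q + (p⁻¹(r)+q⁻¹(r))/r = 3 + 1/(qr) + 1/(rp) + 1/(pq)`. -/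
theorem stmt2 (p q r : ℕ) (hp : 1 < p) (hq : 1 < q) (hr : 1 < r)
    (hpq : Nat.Coprime p q) (hqr : Nat.Coprime q r) (hrp : Nat.Coprime r p)
    (iqp irp irq ipq ipr iqr : ℕ)
    (hiqp : 1 ≤ iqp ∧ iqp ≤ p - 1 ∧ q * iqp ≡ 1 [MOD p])
    (hirp : 1 ≤ irp ∧ irp ≤ p - 1 ∧ r * irp ≡ 1 [MOD p])
    (hirq : 1 ≤ irq ∧ irq ≤ q - 1 ∧ r * irq ≡ 1 [MOD q])
    (hipq : 1 ≤ ipq ∧ ipq ≤ q - 1 ∧ p * ipq ≡ 1 [MOD q])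
    (hipr : 1 ≤ ipr ∧ ipr ≤ r - 1 ∧ p * ipr ≡ 1 [MOD r])
    (hiqr : 1 ≤ iqr ∧ iqr ≤ r - 1 ∧ q * iqr ≡ 1 [MOD r]) :
    ((iqp : ℚ) + irp) / p + ((irq : ℚ) + ipq) / q + ((ipr : ℚ) + iqr) / r
      = 3 + 1 / (q * r) + 1 / (r * p) + 1 / (p * q) := by
  have e1 : q * iqp + p * ipq = q * p + 1 :=
    key_inv q p iqp ipq hq hp hpq.symm hiqp.1 hiqp.2.1 hiqp.2.2 hipq.1 hipq.2.1 hipq.2.2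
  have e2 : r * irp + p * ipr = r * p + 1 :=
    key_inv r p irp ipr hr hp hrp hirp.1 hirp.2.1 hirp.2.2 hipr.1 hipr.2.1 hipr.2.2
  have e3 : r * irq + q * iqr = r * q + 1 :=
    key_inv r q irq iqr hr hq hqr.symm hirq.1 hirq.2.1 hirq.2.2 hiqr.1 hiqr.2.1 hiqr.2.2
  have E1 : (q:ℚ) * iqp + p * ipq = q * p + 1 := by exact_mod_cast e1
  have E2 : (r:ℚ) * irp + p * ipr = r * p + 1 := by exact_mod_cast e2
  have E3 : (r:ℚ) * irq + q * iqr = r * q + 1 := by exact_mod_cast e3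
  have hp0 : (p:ℚ) ≠ 0 := by positivity
  have hq0 : (q:ℚ) ≠ 0 := by positivity
  have hr0 : (r:ℚ) ≠ 0 := by positivity
  have A1 : (iqp:ℚ)/p + (ipq:ℚ)/q = 1 + 1/(p*q) := by
    field_simp; linear_combination E1
  have A2 : (irp:ℚ)/p + (ipr:ℚ)/r = 1 + 1/(r*p) := by
    field_simp; linear_combination E2
  have A3 : (irq:ℚ)/q + (iqr:ℚ)/r = 1 + 1/(q*r) := by
    field_simp; linear_combination E3
  have : ((iqp : ℚ) + irp) / p + ((irq : ℚ) + ipq) / q + ((ipr : ℚ) + iqr) / r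
      = ((iqp:ℚ)/p + (ipq:ℚ)/q) + ((irp:ℚ)/p + (ipr:ℚ)/r) + ((irq:ℚ)/q + (iqr:ℚ)/r) := by
    ring
  rw [this, A1, A2, A3]; ring
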